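/- For any rooted binary tree T on n vertices with root r, the number of subtrees of T containing r satisfies f_T(r) ≥ 3·2^{(n−1)/2} − 2, with equality if and only if T is isomorphic to the rooted binary tree with exactly two vertices at every positive level. -/

import Mathlib

open SimpleGraph Finset

/-- `G` is a rooted binary tree with root `r`: a tree in which the root has degree 2
(or the tree is a single vertex) and every non-root vertex has degree 1 or 3. -/
def IsRootedBinaryTree {V : Type*} [Fintype V] (G : SimpleGraph V) [DecidableRel G.Adj]
    (r : V) : Prop :=
  G.IsTree ∧ (Fintype.card V = 1 ∨ G.degree r = 2) ∧
    ∀ v : V, v ≠ r → G.degree v = 1 ∨ G.degree v = 3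

/-- The height of a rooted tree: the maximum distance from the root to a vertex. -/
noncomputable def treeHeight {V : Type*} [Fintype V] (G : SimpleGraph V) (r : V) : ℕ :=
  Finset.univ.sup (fun v => G.dist r v)

/-- Number of subtrees of `G` containing `x`. -/
noncomputable def numSubtrees {V : Type*} (G : SimpleGraph V) (x : V) : ℕ :=
  {S : Finset V | x ∈ S ∧ (G.induce (S : Set V)).Connected}.ncard


open scoped Classical

namespace RBT

variable {V : Type*} {G : SimpleGraph V}

/-- betweenness via distance -/
def Btw (G : SimpleGraph V) (u w v : V) : Prop := G.dist u w + G.dist w v = G.dist u v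

/-- path-closed (convex) subsets -/
def PC (G : SimpleGraph V) (S : Finset V) : Prop :=
  ∀ u ∈ S, ∀ v ∈ S, ∀ w, Btw G u w v → w ∈ S

section Tree

variable (hT : G.IsTree)
include hT

lemma d0 {u v : V} : G.dist u v = 0 ↔ u = v := hT.isConnected.dist_eq_zero_iff

lemma dtri (u v w : V) : G.dist u w ≤ G.dist u v + G.dist v w :=
  hT.isConnected.dist_triangle

/-- the geodesic path -/
noncomputable def gp (u v : V) : G.Walk u v :=
  (hT.isConnected.exists_path_of_dist u v).choose

lemma gp_isPath (u v : V) : (gp hT u v).IsPath :=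
  (hT.isConnected.exists_path_of_dist u v).choose_spec.1

lemma gp_length (u v : V) : (gp hT u v).length = G.dist u v :=
  (hT.isConnected.exists_path_of_dist u v).choose_spec.2

lemma path_eq_gp {u v : V} {p : G.Walk u v} (hp : p.IsPath) : p = gp hT u v := by
  have := hT.IsAcyclic.path_unique ⟨p, hp⟩ ⟨gp hT u v, gp_isPath hT u v⟩
  exact congrArg Subtype.val this

lemma path_length {u v : V} {p : G.Walk u v} (hp : p.IsPath) : p.length = G.dist u v := by
  rw [path_eq_gp hT hp]; exact gp_length hT u v

lemma gp_support_subset {u v : V} (W : G.Walk u v) :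
    (gp hT u v).support ⊆ W.support := by
  rw [← path_eq_gp hT W.bypass_isPath]; exact W.support_bypass_subset

lemma btw_iff {u w v : V} : Btw G u w v ↔ w ∈ (gp hT u v).support := by
  constructor
  · intro h
    have hq : ((gp hT u w).append (gp hT w v)).length = G.dist u v := by
      rw [Walk.length_append, gp_length, gp_length, h]
    have hp : ((gp hT u w).append (gp hT w v)).IsPath :=
      Walk.isPath_of_length_eq_dist _ hq
    rw [← path_eq_gp hT hp, Walk.mem_support_append_iff]
    exact Or.inr (Walk.start_mem_support _)
  · intro h
    have hsplit := ((gp hT u v).take_spec h).symm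
    have hlen : ((gp hT u v).takeUntil w h).length +
        ((gp hT u v).dropUntil w h).length = G.dist u v := by
      rw [← gp_length hT u v]
      conv_rhs => rw [hsplit]
      rw [Walk.length_append]
    have h1 := G.dist_le ((gp hT u v).takeUntil w h)
    have h2 := G.dist_le ((gp hT u v).dropUntil w h)
    have h3 := dtri hT u w v
    unfold Btw
    omega

omit hT in
lemma btw_comm {u w v : V} : Btw G u w v ↔ Btw G v w u := by
  unfold Btw
  rw [SimpleGraph.dist_comm (u := u) (v := w), SimpleGraph.dist_comm (u := w) (v := v),
    SimpleGraph.dist_comm (u := u) (v := v)]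
  omega

omit hT in
lemma btw_self_left (u v : V) : Btw G u u v := by
  unfold Btw; rw [G.dist_self]; omega

omit hT in
lemma btw_self_right (u v : V) : Btw G u v v := by
  unfold Btw; rw [G.dist_self]; omega

lemma btw_eq {u w : V} (h : Btw G u w u) : w = u := by
  unfold Btw at h
  rw [G.dist_self] at h
  have : G.dist u w = 0 := by omega
  exact ((d0 hT).mp this).symm

/-- if `w` is between `u,v` and `y` between `u,w`, then `y` is between `u,v` -/
lemma btw_mid {u w v y : V} (h1 : Btw G u w v) (h2 : Btw G u y w) : Btw G u y v := by
  unfold Btw at *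
  have t1 := dtri hT u y v
  have t2 := dtri hT y w v
  omega


lemma nbr_exists {x v : V} (hne : v ≠ x) : ∃ c, G.Adj x c ∧ Btw G x c v := by
  have hxv : x ≠ v := hne.symm
  obtain ⟨c, hadj, q, hq⟩ := Walk.exists_eq_cons_of_ne hxv (gp hT x v)
  refine ⟨c, hadj, ?_⟩
  have hlen : (gp hT x v).length = G.dist x v := gp_length hT x v
  rw [hq, Walk.length_cons] at hlen
  have hdc : G.dist c v ≤ q.length := G.dist_le q
  have ht : G.dist x v ≤ G.dist x c + G.dist c v := dtri hT x c v
  have hxc : G.dist x c = 1 := SimpleGraph.dist_eq_one_iff_adj.mpr hadj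
  unfold Btw
  omega

lemma cons_gp {x c v : V} (hadj : G.Adj x c) (hbtw : Btw G x c v) :
    gp hT x v = Walk.cons hadj (gp hT c v) := by
  have hxc : G.dist x c = 1 := SimpleGraph.dist_eq_one_iff_adj.mpr hadj
  have hlen : (Walk.cons hadj (gp hT c v)).length = G.dist x v := by
    rw [Walk.length_cons, gp_length]
    unfold Btw at hbtw
    omega
  exact (path_eq_gp hT (Walk.isPath_of_length_eq_dist _ hlen)).symm

lemma nbr_unique {x c c' v : V} (h1 : G.Adj x c) (h2 : G.Adj x c')
    (b1 : Btw G x c v) (b2 : Btw G x c' v) : c = c' := by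
  have e1 := cons_gp hT h1 b1
  have e2 := cons_gp hT h2 b2
  have : (Walk.cons h1 (gp hT c v)).support = (Walk.cons h2 (gp hT c' v)).support := by
    rw [← e1, ← e2]
  rw [Walk.support_cons, Walk.support_cons, Walk.support_eq_cons (gp hT c v),
    Walk.support_eq_cons (gp hT c' v)] at this
  exact (List.cons.injEq _ _ _ _).mp ((List.cons.injEq _ _ _ _).mp this).2 |>.1

lemma btw_adj_ne {x a v : V} (ha : G.Adj x a) (hbtw : Btw G x a v) : v ≠ x := by
  rintro rfl
  have := btw_eq hT hbtw
  exact ha.ne' this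

/-- no edges between different branches at `x` -/
lemma no_cross_edge {x a b u w : V} (ha : G.Adj x a) (hb : G.Adj x b) (hab : a ≠ b)
    (hu : Btw G x a u) (hw : Btw G x b w) (hadj : G.Adj u w) : False := by
  by_cases hmem : w ∈ (gp hT x u).support
  · have hxwu : Btw G x w u := (btw_iff hT).mpr hmem
    have : Btw G x b u := btw_mid hT hxwu hw
    exact hab (nbr_unique hT ha hb hu this)
  · -- extend the path x→u by the edge u→w
    set W : G.Walk x w := (gp hT x u).append (Walk.cons hadj Walk.nil) with hW
    have hWsupp : W.support = (gp hT x u).support ++ [w] := by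
      rw [hW, Walk.support_append, Walk.support_cons, Walk.support_nil]
      rfl
    have hWpath : W.IsPath := by
      rw [Walk.isPath_def, hWsupp]
      refine List.Nodup.append ((gp_isPath hT x u).support_nodup) (List.nodup_singleton w) ?_
      intro y hy hy'
      rw [List.mem_singleton] at hy'
      subst hy'
      exact hmem hy
    have hWgp : W = gp hT x w := path_eq_gp hT hWpath
    have haW : a ∈ W.support := by
      rw [hWsupp]
      exact List.mem_append_left _ ((btw_iff hT).mp hu)
    have : Btw G x a w := (btw_iff hT).mpr (hWgp ▸ haW)
    exact hab (nbr_unique hT ha hb this hw)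

/-- distance across branches goes through `x` -/
lemma cross_dist_aux {x : V} :
    ∀ n, ∀ u w a b : V, G.Adj x a → G.Adj x b → a ≠ b → G.dist u w ≤ n →
      Btw G x a u → Btw G x b w → G.dist u w = G.dist u x + G.dist x w := by
  intro n
  induction n with
  | zero =>
    intro u w a b ha hb hab hle hu hw
    have : u = w := (d0 hT).mp (Nat.le_zero.mp hle)
    subst this
    exact absurd (nbr_unique hT ha hb hu hw) hab
  | succ n ih =>
    intro u w a b ha hb hab hle hu hw
    by_cases hle' : G.dist u w ≤ n
    · exact ih u w a b ha hb hab hle' hu hw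
    · have huw : u ≠ w := by
        rintro rfl
        exact hab (nbr_unique hT ha hb hu hw)
      obtain ⟨c, hadj, q, hq⟩ := Walk.exists_eq_cons_of_ne huw (gp hT u w)
      have hqpath : q.IsPath := by
        have := gp_isPath hT u w
        rw [hq, Walk.cons_isPath_iff] at this
        exact this.1
      have hqlen : q.length = G.dist c w := path_length hT hqpath
      have hlen : (gp hT u w).length = G.dist u w := gp_length hT u w
      rw [hq, Walk.length_cons] at hlen
      have hcw : G.dist c w + 1 = G.dist u w := by omega
      have hux : G.dist u x ≤ G.dist u c + G.dist c x := dtri hT u c x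
      have huc : G.dist u c = 1 := SimpleGraph.dist_eq_one_iff_adj.mpr hadj
      have htri : G.dist u w ≤ G.dist u x + G.dist x w := dtri hT u x w
      by_cases hcx : c = x
      · subst hcx
        have : G.dist u c = 1 := huc
        omega
      · obtain ⟨nc, hnc, hbnc⟩ := nbr_exists hT hcx
        by_cases hncb : nc = b
        · subst hncb
          exact absurd hadj (fun h => no_cross_edge hT ha hnc hab hu hbnc h)
        · have := ih c w nc b hnc hb hncb (by omega) hbnc hw
          omega

lemma cross_dist {x a b u w : V} (ha : G.Adj x a) (hb : G.Adj x b) (hab : a ≠ b)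
    (hu : Btw G x a u) (hw : Btw G x b w) :
    G.dist u w = G.dist u x + G.dist x w :=
  cross_dist_aux hT (G.dist u w) u w a b ha hb hab le_rfl hu hw


lemma dist_getVert_le {u v : V} (p : G.Walk u v) (i : ℕ) : G.dist u (p.getVert i) ≤ i := by
  induction i with
  | zero => rw [p.getVert_zero, G.dist_self]
  | succ i ih =>
    by_cases h : i < p.length
    · have hadj := p.adj_getVert_succ h
      have : G.dist (p.getVert i) (p.getVert (i+1)) = 1 :=
        SimpleGraph.dist_eq_one_iff_adj.mpr hadj
      have htri := dtri hT u (p.getVert i) (p.getVert (i+1))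
      omega
    · rw [p.getVert_of_length_le (by omega), ← p.getVert_of_length_le (Nat.not_lt.mp h)]
      omega

/-- points between `u` and `v` exist at every distance `i ≤ d u v` -/
lemma btw_attain {u v : V} {i : ℕ} (hi : i ≤ G.dist u v) :
    ∃ w, Btw G u w v ∧ G.dist u w = i := by
  have hlen : (gp hT u v).length = G.dist u v := gp_length hT u v
  refine ⟨(gp hT u v).getVert i, ?_⟩
  have h1 : G.dist u ((gp hT u v).getVert i) ≤ i := dist_getVert_le hT _ i
  have h2 : G.dist ((gp hT u v).getVert i) v ≤ (gp hT u v).length - i := by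
    have hrev : (gp hT u v).reverse.getVert ((gp hT u v).length - i) = (gp hT u v).getVert i := by
      rw [Walk.getVert_reverse]
      congr 1
      omega
    rw [SimpleGraph.dist_comm, ← hrev]
    exact dist_getVert_le hT _ _
  have htri := dtri hT u ((gp hT u v).getVert i) v
  unfold Btw
  omega

end Tree

section Count

variable (G : SimpleGraph V) [Fintype V]

/-- number of path-closed subsets of `A` containing `x` -/
noncomputable def F (A : Finset V) (x : V) : ℕ :=
  (univ.filter (fun S : Finset V => S ⊆ A ∧ x ∈ S ∧ PC G S)).card

end Count

section Bridge

variable [Fintype V] (hT : G.IsTree)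
include hT

omit [Fintype V] in
lemma pc_singleton (x : V) : PC G {x} := by
  intro u hu v hv w hw
  simp only [Finset.mem_singleton] at hu hv ⊢
  subst hu; subst hv
  exact btw_eq hT hw

lemma F_singleton (x : V) : F G {x} x = 1 := by
  unfold F
  have : (univ.filter (fun S : Finset V => S ⊆ {x} ∧ x ∈ S ∧ PC G S)) = {{x}} := by
    ext S
    simp only [Finset.mem_filter, Finset.mem_univ, true_and, Finset.mem_singleton]
    constructor
    · rintro ⟨hsub, hx, -⟩
      rcases Finset.subset_singleton_iff.mp hsub with rfl | rfl
      · exact absurd hx (Finset.notMem_empty x)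
      · rfl
    · rintro rfl
      exact ⟨le_refl _, Finset.mem_singleton_self x, pc_singleton hT x⟩
  rw [this, Finset.card_singleton]

omit [Fintype V] hT in
lemma reach_induce {S : Finset V} :
    ∀ {u v : V} (p : G.Walk u v) (hsupp : ∀ w ∈ p.support, w ∈ S),
      (G.induce (S : Set V)).Reachable
        ⟨u, hsupp u p.start_mem_support⟩ ⟨v, hsupp v p.end_mem_support⟩ := by
  intro u v p
  induction p with
  | nil => intro _; rfl
  | @cons u c v h q ih =>
    intro hsupp
    have hu : u ∈ S := hsupp u (Walk.start_mem_support _)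
    have hc : c ∈ S := hsupp c (by rw [Walk.support_cons]; exact List.mem_cons_of_mem _ q.start_mem_support)
    have hq : ∀ w ∈ q.support, w ∈ S := fun w hw =>
      hsupp w (by rw [Walk.support_cons]; exact List.mem_cons_of_mem _ hw)
    have hadj : (G.induce (S : Set V)).Adj ⟨u, hu⟩ ⟨c, hc⟩ := by
      simp only [SimpleGraph.comap_adj, Function.Embedding.coe_subtype]
      exact h
    exact (hadj.reachable).trans (ih hq)

omit [Fintype V] in
lemma connected_iff_pc {S : Finset V} (hne : S.Nonempty) :
    (G.induce (S : Set V)).Connected ↔ PC G S := by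
  constructor
  · intro hconn u hu v hv w hw
    obtain ⟨W'⟩ := hconn.preconnected ⟨u, hu⟩ ⟨v, hv⟩
    set W : G.Walk u v := W'.map (SimpleGraph.Embedding.induce (S : Set V)).toHom with hWdef
    have hWsupp : ∀ y ∈ W.support, y ∈ S := by
      intro y hy
      have hy' : y ∈ (W'.map (SimpleGraph.Embedding.induce (S : Set V)).toHom).support := hy
      rw [Walk.support_map, List.mem_map] at hy'
      obtain ⟨⟨z, hz⟩, -, rfl⟩ := hy'
      exact hz
    have hmem : w ∈ (gp hT u v).support := (btw_iff hT).mp hw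
    exact hWsupp w (gp_support_subset hT W hmem)
  · intro hpc
    obtain ⟨r, hr⟩ := hne
    rw [connected_iff_exists_forall_reachable]
    refine ⟨⟨r, by simpa using hr⟩, ?_⟩
    rintro ⟨v, hv⟩
    have hv' : v ∈ S := by simpa using hv
    have hsup : ∀ w ∈ (gp hT r v).support, w ∈ S := by
      intro w hw
      exact hpc r hr v hv' w ((btw_iff hT).mpr hw)
    exact reach_induce (gp hT r v) hsup

lemma numSubtrees_eq_F (r : V) : numSubtrees G r = F G Finset.univ r := by
  unfold numSubtrees F
  have hset : {S : Finset V | r ∈ S ∧ (G.induce (S : Set V)).Connected} =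
      {S : Finset V | S ⊆ Finset.univ ∧ r ∈ S ∧ PC G S} := by
    ext S
    simp only [Set.mem_setOf_eq]
    constructor
    · rintro ⟨hr, hconn⟩
      exact ⟨Finset.subset_univ S, hr, (connected_iff_pc hT ⟨r, hr⟩).mp hconn⟩
    · rintro ⟨-, hr, hpc⟩
      exact ⟨hr, (connected_iff_pc hT ⟨r, hr⟩).mpr hpc⟩
  rw [hset]
  rw [Set.ncard_eq_toFinset_card']
  congr 1
  ext S
  simp

end Bridge

section Decomp

/-- the branch of `A` at neighbor `a` of `x` -/
noncomputable def Br (G : SimpleGraph V) (A : Finset V) (x a : V) : Finset V :=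
  A.filter (fun v => Btw G x a v)

variable (hT : G.IsTree)
include hT

omit hT in
lemma mem_Br {A : Finset V} {x a v : V} : v ∈ Br G A x a ↔ v ∈ A ∧ Btw G x a v := by
  unfold Br; simp

omit hT in
lemma Br_subset {A : Finset V} {x a : V} : Br G A x a ⊆ A := Finset.filter_subset _ _

omit hT in
lemma a_mem_Br {A : Finset V} {x a : V} (haA : a ∈ A) : a ∈ Br G A x a :=
  mem_Br.mpr ⟨haA, btw_self_right x a⟩

lemma x_not_mem_Br {A : Finset V} {x a : V} (ha : G.Adj x a) : x ∉ Br G A x a := by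
  intro h
  exact ha.ne' (btw_eq hT (mem_Br.mp h).2)

lemma Br_dist {A : Finset V} {x a v : V} (ha : G.Adj x a) (hv : v ∈ Br G A x a) :
    G.dist x v = 1 + G.dist a v := by
  have hb := (mem_Br.mp hv).2
  have hxa : G.dist x a = 1 := SimpleGraph.dist_eq_one_iff_adj.mpr ha
  unfold Btw at hb
  omega

lemma level_zero {A : Finset V} {x : V} (hx : x ∈ A) :
    A.filter (fun v => G.dist x v = 0) = {x} := by
  ext v
  simp only [Finset.mem_filter, Finset.mem_singleton]
  constructor
  · rintro ⟨-, h⟩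
    exact ((d0 hT).mp h).symm
  · rintro rfl
    exact ⟨hx, by simp⟩

omit hT in
lemma level_one {A : Finset V} {x : V} :
    A.filter (fun v => G.dist x v = 1) = A.filter (G.Adj x) := by
  ext v
  simp only [Finset.mem_filter, SimpleGraph.dist_eq_one_iff_adj]

lemma level_nonempty {A : Finset V} {x : V} (hA : PC G A) (hx : x ∈ A) {m : ℕ}
    (hm : m ≤ A.sup (fun v => G.dist x v)) :
    (A.filter (fun v => G.dist x v = m)).Nonempty := by
  obtain ⟨v0, hv0, hsup⟩ := Finset.exists_mem_eq_sup A ⟨x, hx⟩ (fun v => G.dist x v)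
  have hm' : m ≤ G.dist x v0 := hsup ▸ hm
  obtain ⟨w, hwb, hwd⟩ := btw_attain hT hm'
  exact ⟨w, Finset.mem_filter.mpr ⟨hA x hx v0 hv0 w hwb, hwd⟩⟩

lemma sup_eq_zero_iff {A : Finset V} {x : V} (hx : x ∈ A) :
    A.sup (fun v => G.dist x v) = 0 ↔ A = {x} := by
  constructor
  · intro h
    ext v
    simp only [Finset.mem_singleton]
    constructor
    · intro hv
      have : G.dist x v ≤ 0 := h ▸ Finset.le_sup hv
      exact ((d0 hT).mp (Nat.le_zero.mp this)).symm
    · rintro rfl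
      exact hx
  · rintro rfl
    simp [G.dist_self]


section Setup

variable {A : Finset V} {x a b : V}
variable (hA : PC G A) (hx : x ∈ A) (hN : A.filter (G.Adj x) = {a, b}) (hab : a ≠ b)

omit hT in
include hN in
lemma adj_a : G.Adj x a := by
  have : a ∈ A.filter (G.Adj x) := by rw [hN]; simp
  exact (Finset.mem_filter.mp this).2

omit hT in
include hN in
lemma mem_a : a ∈ A := by
  have : a ∈ A.filter (G.Adj x) := by rw [hN]; simp
  exact (Finset.mem_filter.mp this).1

omit hT in
include hN in
lemma adj_b : G.Adj x b := by
  have : b ∈ A.filter (G.Adj x) := by rw [hN]; simp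
  exact (Finset.mem_filter.mp this).2

omit hT in
include hN in
lemma mem_b : b ∈ A := by
  have : b ∈ A.filter (G.Adj x) := by rw [hN]; simp
  exact (Finset.mem_filter.mp this).1

include hA hx hN in
lemma partition {v : V} (hv : v ∈ A) (hvx : v ≠ x) :
    v ∈ Br G A x a ∨ v ∈ Br G A x b := by
  obtain ⟨c, hcadj, hcb⟩ := nbr_exists hT hvx
  have hcA : c ∈ A := hA x hx v hv c hcb
  have : c ∈ A.filter (G.Adj x) := Finset.mem_filter.mpr ⟨hcA, hcadj⟩
  rw [hN] at this
  rcases Finset.mem_insert.mp this with rfl | h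
  · exact Or.inl (mem_Br.mpr ⟨hv, hcb⟩)
  · rw [Finset.mem_singleton] at h
    subst h
    exact Or.inr (mem_Br.mpr ⟨hv, hcb⟩)

include hN hab in
lemma Br_disjoint : Disjoint (Br G A x a) (Br G A x b) := by
  rw [Finset.disjoint_left]
  intro v hva hvb
  exact hab (nbr_unique hT (adj_a hN) (adj_b hN) (mem_Br.mp hva).2 (mem_Br.mp hvb).2)

include hA hx hN hab in
lemma A_eq_decomp : A = insert x (Br G A x a ∪ Br G A x b) := by
  ext v
  constructor
  · intro hv
    by_cases hvx : v = x
    · subst hvx; exact Finset.mem_insert_self _ _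
    · rcases partition hT hA hx hN hv hvx with h | h
      · exact Finset.mem_insert.mpr (Or.inr (Finset.mem_union_left _ h))
      · exact Finset.mem_insert.mpr (Or.inr (Finset.mem_union_right _ h))
  · intro hv
    rcases Finset.mem_insert.mp hv with rfl | h
    · exact hx
    · rcases Finset.mem_union.mp h with h | h
      · exact Br_subset h
      · exact Br_subset h

include hA hx hN hab in
lemma card_decomp : A.card = 1 + (Br G A x a).card + (Br G A x b).card := by
  have h := A_eq_decomp hT hA hx hN hab
  have : A.card = (insert x (Br G A x a ∪ Br G A x b)).card := by rw [← h]
  rw [this, Finset.card_insert_of_notMem (by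
      rw [Finset.mem_union]
      push_neg
      exact ⟨x_not_mem_Br hT (adj_a hN), x_not_mem_Br hT (adj_b hN)⟩),
    Finset.card_union_of_disjoint (Br_disjoint hT hN hab)]
  omega

include hA hx hN hab in
lemma Br_pc : PC G (Br G A x a) := by
  intro u hu v hv w hw
  have ha := adj_a hN
  have hb := adj_b hN
  have hxa : G.dist x a = 1 := SimpleGraph.dist_eq_one_iff_adj.mpr ha
  have huA := (mem_Br.mp hu).1
  have hvA := (mem_Br.mp hv).1
  have hub := (mem_Br.mp hu).2
  have hvb := (mem_Br.mp hv).2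
  have hwA : w ∈ A := hA u huA v hvA w hw
  have hwx : w ≠ x := by
    intro heq
    unfold Btw at hub hvb hw
    have e1 : G.dist u w = G.dist u x := by rw [heq]
    have e2 : G.dist w v = G.dist x v := by rw [heq]
    have t : G.dist u v ≤ G.dist u a + G.dist a v := dtri hT u a v
    have c1 : G.dist u x = G.dist x u := SimpleGraph.dist_comm ..
    have c2 : G.dist u a = G.dist a u := SimpleGraph.dist_comm ..
    omega
  rcases partition hT hA hx hN hwA hwx with h | h
  · exact h
  · exfalso
    have h1 := cross_dist hT ha hb hab hub (mem_Br.mp h).2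
    have h2 := cross_dist hT hb ha hab.symm (mem_Br.mp h).2 hvb
    have t : G.dist u v ≤ G.dist u x + G.dist x v := dtri hT u x v
    have hwx0 : G.dist x w ≠ 0 := fun h0 => hwx ((d0 hT).mp h0).symm
    unfold Btw at hw
    have c1 : G.dist w x = G.dist x w := SimpleGraph.dist_comm ..
    have c2 : G.dist w v = G.dist v w := SimpleGraph.dist_comm ..
    have c3 : G.dist x v = G.dist v x := SimpleGraph.dist_comm ..
    omega

include hN hab in
lemma b_not_mem_Br_a : b ∉ Br G A x a := by
  intro h
  exact hab (nbr_unique hT (adj_a hN) (adj_b hN) (mem_Br.mp h).2 (btw_self_right x b))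

include hA hx hN hab in
lemma Br_root_nbrs : (Br G A x a).filter (G.Adj a) = (A.filter (G.Adj a)).erase x := by
  ext c
  simp only [Finset.mem_filter, Finset.mem_erase, mem_Br]
  constructor
  · rintro ⟨⟨hcA, hcb⟩, hadj⟩
    refine ⟨?_, hcA, hadj⟩
    rintro rfl
    exact (adj_a hN).ne' (btw_eq hT hcb)
  · rintro ⟨hcx, hcA, hadj⟩
    refine ⟨⟨hcA, ?_⟩, hadj⟩
    rcases partition hT hA hx hN hcA hcx with h | h
    · exact (mem_Br.mp h).2
    · exact absurd hadj (fun had => no_cross_edge hT (adj_a hN) (adj_b hN) hab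
        (btw_self_right x a) (mem_Br.mp h).2 had)

include hA hx hN hab in
lemma Br_other_nbrs {v : V} (hv : v ∈ Br G A x a) (hva : v ≠ a) :
    (Br G A x a).filter (G.Adj v) = A.filter (G.Adj v) := by
  ext c
  simp only [Finset.mem_filter, mem_Br]
  constructor
  · rintro ⟨⟨hcA, -⟩, hadj⟩
    exact ⟨hcA, hadj⟩
  · rintro ⟨hcA, hadj⟩
    refine ⟨⟨hcA, ?_⟩, hadj⟩
    have hcx : c ≠ x := by
      rintro rfl
      have : v ∈ A.filter (G.Adj c) := Finset.mem_filter.mpr ⟨(mem_Br.mp hv).1, hadj.symm⟩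
      rw [hN] at this
      rcases Finset.mem_insert.mp this with rfl | hvb
      · exact hva rfl
      · rw [Finset.mem_singleton] at hvb
        subst hvb
        exact b_not_mem_Br_a hT hN hab hv
    rcases partition hT hA hx hN hcA hcx with h | h
    · exact (mem_Br.mp h).2
    · exact absurd hadj (fun had => no_cross_edge hT (adj_a hN) (adj_b hN) hab
        (mem_Br.mp hv).2 (mem_Br.mp h).2 had)

include hN in
lemma sup_Br_shift :
    (Br G A x a).sup (fun v => G.dist x v) = 1 + (Br G A x a).sup (fun v => G.dist a v) := by
  have hne : (Br G A x a).Nonempty := ⟨a, a_mem_Br (mem_a hN)⟩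
  apply le_antisymm
  · apply Finset.sup_le
    intro v hv
    rw [Br_dist hT (adj_a hN) hv]
    exact Nat.add_le_add_left (Finset.le_sup hv) 1
  · obtain ⟨v0, hv0, hsup⟩ := Finset.exists_mem_eq_sup _ hne (fun v => G.dist a v)
    rw [hsup, ← Br_dist hT (adj_a hN) hv0]
    exact Finset.le_sup hv0

include hA hx hN hab in
lemma height_decomp :
    A.sup (fun v => G.dist x v) =
      1 + max ((Br G A x a).sup (fun v => G.dist a v))
              ((Br G A x b).sup (fun v => G.dist b v)) := by
  have h := A_eq_decomp hT hA hx hN hab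
  have : A.sup (fun v => G.dist x v) = (insert x (Br G A x a ∪ Br G A x b)).sup
      (fun v => G.dist x v) := by rw [← h]
  rw [this, Finset.sup_insert, Finset.sup_union, G.dist_self,
    sup_Br_shift hT hN, sup_Br_shift hT (by rw [hN, Finset.pair_comm])]
  simp only [max_def]
  split_ifs <;> omega

include hA hx hN hab in
lemma level_card {l : ℕ} (hl : 1 ≤ l) :
    (A.filter (fun v => G.dist x v = l)).card =
      ((Br G A x a).filter (fun v => G.dist a v = l - 1)).card +
      ((Br G A x b).filter (fun v => G.dist b v = l - 1)).card := by
  have key : A.filter (fun v => G.dist x v = l) =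
      ((Br G A x a).filter (fun v => G.dist a v = l - 1)) ∪
      ((Br G A x b).filter (fun v => G.dist b v = l - 1)) := by
    ext v
    simp only [Finset.mem_filter, Finset.mem_union, mem_Br]
    constructor
    · rintro ⟨hvA, hd⟩
      have hvx : v ≠ x := by
        rintro rfl
        rw [G.dist_self] at hd
        omega
      rcases partition hT hA hx hN hvA hvx with h | h
      · have := Br_dist hT (adj_a hN) h
        exact Or.inl ⟨⟨hvA, (mem_Br.mp h).2⟩, by omega⟩
      · have := Br_dist hT (adj_b hN) h
        exact Or.inr ⟨⟨hvA, (mem_Br.mp h).2⟩, by omega⟩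
    · rintro (⟨hv, hd⟩ | ⟨hv, hd⟩)
      · have := Br_dist hT (adj_a hN) (mem_Br.mpr hv)
        exact ⟨hv.1, by omega⟩
      · have := Br_dist hT (adj_b hN) (mem_Br.mpr hv)
        exact ⟨hv.1, by omega⟩
  rw [key, Finset.card_union_of_disjoint]
  exact Finset.disjoint_filter_filter (Br_disjoint hT hN hab)

include hA hx in
lemma step_in_branch (ha : G.Adj x a) {Sa : Finset V} (hSa : Sa ⊆ Br G A x a)
    (haSa : a ∈ Sa) (hpc : PC G Sa) {u w : V} (hu : u ∈ Sa) (hbw : Btw G x w u) :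
    w = x ∨ w ∈ Sa := by
  by_cases hwx : w = x
  · exact Or.inl hwx
  · right
    have hub : Btw G x a u := (mem_Br.mp (hSa hu)).2
    have huA : u ∈ A := (mem_Br.mp (hSa hu)).1
    have hwA : w ∈ A := hA x hx u huA w hbw
    obtain ⟨nc, hncadj, hncb⟩ := nbr_exists hT hwx
    have hncu : Btw G x nc u := btw_mid hT hbw hncb
    have hnca : nc = a := nbr_unique hT hncadj ha hncu hub
    subst hnca
    have hxa : G.dist x nc = 1 := SimpleGraph.dist_eq_one_iff_adj.mpr ha
    have hbaw : Btw G nc w u := by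
      unfold Btw at hncb hub hbw ⊢
      omega
    exact hpc nc haSa u hu w hbaw

include hA hx hN hab in
lemma cross_step {Sa Sb : Finset V} (hSa : Sa ⊆ Br G A x a) (hSb : Sb ⊆ Br G A x b)
    (haSa : a ∈ Sa) (hbSb : b ∈ Sb) (hpa : PC G Sa) (hpb : PC G Sb)
    {u v w : V} (hu : u ∈ Sa) (hv : v ∈ Sb) (hw : Btw G u w v) :
    w = x ∨ w ∈ Sa ∨ w ∈ Sb := by
  have ha := adj_a hN
  have hb := adj_b hN
  have hua := (mem_Br.mp (hSa hu)).2
  have hvb := (mem_Br.mp (hSb hv)).2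
  have huA := (mem_Br.mp (hSa hu)).1
  have hvA := (mem_Br.mp (hSb hv)).1
  by_cases hwx : w = x
  · exact Or.inl hwx
  have hwA : w ∈ A := hA u huA v hvA w hw
  have huv : G.dist u v = G.dist u x + G.dist x v := cross_dist hT ha hb hab hua hvb
  rcases partition hT hA hx hN hwA hwx with h | h
  · -- w in branch a
    have hwv : G.dist w v = G.dist w x + G.dist x v :=
      cross_dist hT ha hb hab (mem_Br.mp h).2 hvb
    have hxwu : Btw G x w u := by
      rw [← btw_comm]
      unfold Btw at hw ⊢
      have c1 : G.dist x u = G.dist u x := SimpleGraph.dist_comm ..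
      omega
    rcases step_in_branch hT hA hx ha hSa haSa hpa hu hxwu with h' | h'
    · exact Or.inl h'
    · exact Or.inr (Or.inl h')
  · -- w in branch b
    have huw : G.dist u w = G.dist u x + G.dist x w :=
      cross_dist hT ha hb hab hua (mem_Br.mp h).2
    have hxwv : Btw G x w v := by
      unfold Btw at hw ⊢
      omega
    rcases step_in_branch hT hA hx hb hSb hbSb hpb hv hxwv with h' | h'
    · exact Or.inl h'
    · exact Or.inr (Or.inr h')

include hA hx hN hab in
lemma pc_insert {Sa Sb : Finset V} (hSa : Sa ⊆ Br G A x a) (hSb : Sb ⊆ Br G A x b)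
    (ha' : Sa = ∅ ∨ (a ∈ Sa ∧ PC G Sa)) (hb' : Sb = ∅ ∨ (b ∈ Sb ∧ PC G Sb)) :
    PC G (insert x (Sa ∪ Sb)) := by
  have ha := adj_a hN
  have hb := adj_b hN
  have memS : ∀ {y : V}, y ∈ insert x (Sa ∪ Sb) ↔ y = x ∨ y ∈ Sa ∨ y ∈ Sb := by
    intro y
    simp [Finset.mem_insert, Finset.mem_union]
  have getA : ∀ {S' : Finset V} {c : V}, S' ≠ ∅ → (S' = ∅ ∨ (c ∈ S' ∧ PC G S')) →
      c ∈ S' ∧ PC G S' := by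
    rintro S' c hne (rfl | h)
    · exact absurd rfl hne
    · exact h
  intro u hu v hv w hw
  rw [memS] at hu hv ⊢
  rcases hu with rfl | hu | hu <;> rcases hv with rfl | hv | hv
  · exact Or.inl (btw_eq hT hw)
  · -- u = x, v ∈ Sa
    obtain ⟨haSa, hpa⟩ := getA (Finset.ne_empty_of_mem hv) ha'
    rcases step_in_branch hT hA hx ha hSa haSa hpa hv hw with h | h
    · exact Or.inl h
    · exact Or.inr (Or.inl h)
  · obtain ⟨hbSb, hpb⟩ := getA (Finset.ne_empty_of_mem hv) hb'
    rcases step_in_branch hT hA hx hb hSb hbSb hpb hv hw with h | h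
    · exact Or.inl h
    · exact Or.inr (Or.inr h)
  · -- u ∈ Sa, v = x
    obtain ⟨haSa, hpa⟩ := getA (Finset.ne_empty_of_mem hu) ha'
    rcases step_in_branch hT hA hx ha hSa haSa hpa hu ((btw_comm).mp hw) with h | h
    · exact Or.inl h
    · exact Or.inr (Or.inl h)
  · -- u, v ∈ Sa
    obtain ⟨haSa, hpa⟩ := getA (Finset.ne_empty_of_mem hu) ha'
    exact Or.inr (Or.inl (hpa u hu v hv w hw))
  · -- u ∈ Sa, v ∈ Sb
    obtain ⟨haSa, hpa⟩ := getA (Finset.ne_empty_of_mem hu) ha'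
    obtain ⟨hbSb, hpb⟩ := getA (Finset.ne_empty_of_mem hv) hb'
    exact cross_step hT hA hx hN hab hSa hSb haSa hbSb hpa hpb hu hv hw
  · obtain ⟨hbSb, hpb⟩ := getA (Finset.ne_empty_of_mem hu) hb'
    rcases step_in_branch hT hA hx hb hSb hbSb hpb hu ((btw_comm).mp hw) with h | h
    · exact Or.inl h
    · exact Or.inr (Or.inr h)
  · -- u ∈ Sb, v ∈ Sa : swap roles
    obtain ⟨haSa, hpa⟩ := getA (Finset.ne_empty_of_mem hv) ha'
    obtain ⟨hbSb, hpb⟩ := getA (Finset.ne_empty_of_mem hu) hb'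
    rcases cross_step hT hA hx (by rw [hN, Finset.pair_comm]) hab.symm hSb hSa hbSb haSa
        hpb hpa hu hv hw with h | h | h
    · exact Or.inl h
    · exact Or.inr (Or.inr h)
    · exact Or.inr (Or.inl h)
  · obtain ⟨hbSb, hpb⟩ := getA (Finset.ne_empty_of_mem hu) hb'
    exact Or.inr (Or.inr (hpb u hu v hv w hw))

include hA hx hN hab in
lemma F_decomp [Fintype V] :
    F G A x = (F G (Br G A x a) a + 1) * (F G (Br G A x b) b + 1) := by
  have ha := adj_a hN
  have hb := adj_b hN
  have haA := mem_a hN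
  have hbA := mem_b hN
  set Ta : Finset (Finset V) :=
    insert ∅ (univ.filter (fun S => S ⊆ Br G A x a ∧ a ∈ S ∧ PC G S)) with hTa
  set Tb : Finset (Finset V) :=
    insert ∅ (univ.filter (fun S => S ⊆ Br G A x b ∧ b ∈ S ∧ PC G S)) with hTb
  have mem_Ta : ∀ {S : Finset V}, S ∈ Ta ↔ S ⊆ Br G A x a ∧ (S = ∅ ∨ (a ∈ S ∧ PC G S)) := by
    intro S
    rw [hTa]
    simp only [Finset.mem_insert, Finset.mem_filter, Finset.mem_univ, true_and]
    constructor
    · rintro (rfl | ⟨h1, h2, h3⟩)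
      · exact ⟨Finset.empty_subset _, Or.inl rfl⟩
      · exact ⟨h1, Or.inr ⟨h2, h3⟩⟩
    · rintro ⟨h1, rfl | ⟨h2, h3⟩⟩
      · exact Or.inl rfl
      · exact Or.inr ⟨h1, h2, h3⟩
  have mem_Tb : ∀ {S : Finset V}, S ∈ Tb ↔ S ⊆ Br G A x b ∧ (S = ∅ ∨ (b ∈ S ∧ PC G S)) := by
    intro S
    rw [hTb]
    simp only [Finset.mem_insert, Finset.mem_filter, Finset.mem_univ, true_and]
    constructor
    · rintro (rfl | ⟨h1, h2, h3⟩)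
      · exact ⟨Finset.empty_subset _, Or.inl rfl⟩
      · exact ⟨h1, Or.inr ⟨h2, h3⟩⟩
    · rintro ⟨h1, rfl | ⟨h2, h3⟩⟩
      · exact Or.inl rfl
      · exact Or.inr ⟨h1, h2, h3⟩
  have cardTa : Ta.card = F G (Br G A x a) a + 1 := by
    rw [hTa, Finset.card_insert_of_notMem (by
      simp only [Finset.mem_filter, Finset.mem_univ, true_and, not_and]
      intro _ h
      exact absurd h (Finset.notMem_empty a))]
    rfl
  have cardTb : Tb.card = F G (Br G A x b) b + 1 := by
    rw [hTb, Finset.card_insert_of_notMem (by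
      simp only [Finset.mem_filter, Finset.mem_univ, true_and, not_and]
      intro _ h
      exact absurd h (Finset.notMem_empty b))]
    rfl
  have key : (univ.filter (fun S : Finset V => S ⊆ A ∧ x ∈ S ∧ PC G S)).card
      = (Ta ×ˢ Tb).card := by
    apply Finset.card_bij' (i := fun S _ => (S ∩ Br G A x a, S ∩ Br G A x b))
      (j := fun p _ => insert x (p.1 ∪ p.2))
    · -- hi
      intro S hS
      simp only [Finset.mem_filter, Finset.mem_univ, true_and] at hS
      obtain ⟨hSA, hxS, hpc⟩ := hS
      rw [Finset.mem_product]
      constructor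
      · rw [mem_Ta]
        refine ⟨Finset.inter_subset_right, ?_⟩
        rcases Finset.eq_empty_or_nonempty (S ∩ Br G A x a) with he | ⟨v, hv⟩
        · exact Or.inl he
        · right
          have hvS := (Finset.mem_inter.mp hv).1
          have hvB := (Finset.mem_inter.mp hv).2
          have haS : a ∈ S := hpc x hxS v hvS a (mem_Br.mp hvB).2
          refine ⟨Finset.mem_inter.mpr ⟨haS, a_mem_Br haA⟩, ?_⟩
          intro u hu v' hv' w hw
          have hwS : w ∈ S := hpc u (Finset.mem_inter.mp hu).1 v' (Finset.mem_inter.mp hv').1 w hw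
          have hwB : w ∈ Br G A x a := Br_pc hT hA hx hN hab u (Finset.mem_inter.mp hu).2
            v' (Finset.mem_inter.mp hv').2 w hw
          exact Finset.mem_inter.mpr ⟨hwS, hwB⟩
      · rw [mem_Tb]
        refine ⟨Finset.inter_subset_right, ?_⟩
        rcases Finset.eq_empty_or_nonempty (S ∩ Br G A x b) with he | ⟨v, hv⟩
        · exact Or.inl he
        · right
          have hvS := (Finset.mem_inter.mp hv).1
          have hvB := (Finset.mem_inter.mp hv).2
          have hbS : b ∈ S := hpc x hxS v hvS b (mem_Br.mp hvB).2
          refine ⟨Finset.mem_inter.mpr ⟨hbS, a_mem_Br hbA⟩, ?_⟩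
          intro u hu v' hv' w hw
          have hwS : w ∈ S := hpc u (Finset.mem_inter.mp hu).1 v' (Finset.mem_inter.mp hv').1 w hw
          have hwB : w ∈ Br G A x b :=
            Br_pc hT hA hx (by rw [hN, Finset.pair_comm]) hab.symm u (Finset.mem_inter.mp hu).2
              v' (Finset.mem_inter.mp hv').2 w hw
          exact Finset.mem_inter.mpr ⟨hwS, hwB⟩
    · -- hj
      rintro ⟨Sa, Sb⟩ hp
      rw [Finset.mem_product] at hp
      obtain ⟨hpa, hpb⟩ := hp
      rw [mem_Ta] at hpa
      rw [mem_Tb] at hpb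
      simp only [Finset.mem_filter, Finset.mem_univ, true_and]
      refine ⟨?_, Finset.mem_insert_self _ _, ?_⟩
      · intro v hv
        rcases Finset.mem_insert.mp hv with rfl | hv'
        · exact hx
        · rcases Finset.mem_union.mp hv' with h | h
          · exact Br_subset (hpa.1 h)
          · exact Br_subset (hpb.1 h)
      · exact pc_insert hT hA hx hN hab hpa.1 hpb.1 hpa.2 hpb.2
    · -- left_inv
      intro S hS
      simp only [Finset.mem_filter, Finset.mem_univ, true_and] at hS
      obtain ⟨hSA, hxS, hpc⟩ := hS
      ext v
      simp only [Finset.mem_insert, Finset.mem_union, Finset.mem_inter]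
      constructor
      · rintro (rfl | ⟨h, -⟩ | ⟨h, -⟩) <;> first | exact hxS | exact h
      · intro hv
        by_cases hvx : v = x
        · exact Or.inl hvx
        · rcases partition hT hA hx hN (hSA hv) hvx with h | h
          · exact Or.inr (Or.inl ⟨hv, h⟩)
          · exact Or.inr (Or.inr ⟨hv, h⟩)
    · -- right_inv
      rintro ⟨Sa, Sb⟩ hp
      rw [Finset.mem_product] at hp
      obtain ⟨hpa, hpb⟩ := hp
      rw [mem_Ta] at hpa
      rw [mem_Tb] at hpb
      have hdisj := Br_disjoint hT hN hab
      have e1 : insert x (Sa ∪ Sb) ∩ Br G A x a = Sa := by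
        ext v
        simp only [Finset.mem_inter, Finset.mem_insert, Finset.mem_union]
        constructor
        · rintro ⟨rfl | h | h, hB⟩
          · exact absurd hB (x_not_mem_Br hT ha)
          · exact h
          · exact absurd hB (Finset.disjoint_right.mp hdisj (hpb.1 h))
        · intro hv
          exact ⟨Or.inr (Or.inl hv), hpa.1 hv⟩
      have e2 : insert x (Sa ∪ Sb) ∩ Br G A x b = Sb := by
        ext v
        simp only [Finset.mem_inter, Finset.mem_insert, Finset.mem_union]
        constructor
        · rintro ⟨rfl | h | h, hB⟩
          · exact absurd hB (x_not_mem_Br hT hb)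
          · exact absurd hB (Finset.disjoint_left.mp hdisj (hpa.1 h))
          · exact h
        · intro hv
          exact ⟨Or.inr (Or.inr hv), hpb.1 hv⟩
      exact Prod.ext e1 e2
  unfold F
  rw [key, Finset.card_product, cardTa, cardTb]
  rfl

include hN in
lemma Br_singleton_of_sup_zero (hs : (Br G A x b).sup (fun v => G.dist b v) = 0) :
    Br G A x b = {b} := by
  have hb := adj_b hN
  have hbB : b ∈ Br G A x b := a_mem_Br (mem_b hN)
  exact (sup_eq_zero_iff hT hbB).mp hs

include hA hx hN hab in
lemma levels_fwd
    (hlevA : ∀ l, 1 ≤ l → l ≤ (Br G A x a).sup (fun v => G.dist a v) →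
      ((Br G A x a).filter (fun v => G.dist a v = l)).card = 2)
    (hBb : Br G A x b = {b}) :
    ∀ l, 1 ≤ l → l ≤ A.sup (fun v => G.dist x v) →
      (A.filter (fun v => G.dist x v = l)).card = 2 := by
  intro l hl hlH
  have hsupb : (Br G A x b).sup (fun v => G.dist b v) = 0 := by
    rw [hBb, Finset.sup_singleton, G.dist_self]
  have hH := height_decomp hT hA hx hN hab
  rw [hsupb] at hH
  rw [level_card hT hA hx hN hab hl]
  have hlevb : ((Br G A x b).filter (fun v => G.dist b v = l - 1)).card
      = if l = 1 then 1 else 0 := by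
    rw [hBb, Finset.filter_singleton]
    by_cases h1 : l = 1
    · subst h1
      rw [if_pos (by simp), if_pos rfl, Finset.card_singleton]
    · rw [if_neg (by
        rw [G.dist_self]
        omega), if_neg h1, Finset.card_empty]
  by_cases h1 : l = 1
  · subst h1
    rw [hlevb, if_pos rfl]
    have h0 : ((Br G A x a).filter (fun v => G.dist a v = 0)).card = 1 := by
      rw [level_zero hT (a_mem_Br (mem_a hN)), Finset.card_singleton]
    simp only [show (1:ℕ)-1 = 0 from rfl] at hlevb ⊢
    omega
  · have hl2 : 2 ≤ l := by omega
    have hla : l - 1 ≤ (Br G A x a).sup (fun v => G.dist a v) := by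
      rw [hH] at hlH
      omega
    rw [hlevA (l-1) (by omega) hla, hlevb, if_neg h1]

include hA hx hN hab in
lemma levels_bwd
    (hlev : ∀ l, 1 ≤ l → l ≤ A.sup (fun v => G.dist x v) →
      (A.filter (fun v => G.dist x v = l)).card = 2)
    (hBb : Br G A x b = {b}) :
    ∀ l, 1 ≤ l → l ≤ (Br G A x a).sup (fun v => G.dist a v) →
      ((Br G A x a).filter (fun v => G.dist a v = l)).card = 2 := by
  intro l hl hla
  have hsupb : (Br G A x b).sup (fun v => G.dist b v) = 0 := by
    rw [hBb, Finset.sup_singleton, G.dist_self]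
  have hH := height_decomp hT hA hx hN hab
  rw [hsupb] at hH
  have hkey := level_card hT hA hx hN hab (l := l + 1) (by omega)
  have hlevb : ((Br G A x b).filter (fun v => G.dist b v = l + 1 - 1)).card = 0 := by
    rw [hBb, Finset.filter_singleton, if_neg (by
      rw [G.dist_self]
      omega), Finset.card_empty]
  have hA2 : (A.filter (fun v => G.dist x v = l + 1)).card = 2 := by
    apply hlev (l+1) (by omega)
    rw [hH]
    omega
  simp only [Nat.add_sub_cancel] at hkey hlevb
  omega

include hA hx hN hab in
lemma min_height
    (h2a : ((Br G A x a).filter (G.Adj a)).card = 0 ∨ ((Br G A x a).filter (G.Adj a)).card = 2)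
    (h2b : ((Br G A x b).filter (G.Adj b)).card = 0 ∨ ((Br G A x b).filter (G.Adj b)).card = 2)
    (hlev : ∀ l, 1 ≤ l → l ≤ A.sup (fun v => G.dist x v) →
      (A.filter (fun v => G.dist x v = l)).card = 2) :
    (Br G A x a).sup (fun v => G.dist a v) = 0 ∨
      (Br G A x b).sup (fun v => G.dist b v) = 0 := by
  by_contra hcon
  push_neg at hcon
  obtain ⟨hha, hhb⟩ := hcon
  have hha1 : 1 ≤ (Br G A x a).sup (fun v => G.dist a v) := by omega
  have hhb1 : 1 ≤ (Br G A x b).sup (fun v => G.dist b v) := by omega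
  have hH := height_decomp hT hA hx hN hab
  have hkey := level_card hT hA hx hN hab (l := 2) (by omega)
  have hA2 : (A.filter (fun v => G.dist x v = 2)).card = 2 := by
    apply hlev 2 (by omega)
    rw [hH]
    omega
  have hnea : ((Br G A x a).filter (fun v => G.dist a v = 1)).Nonempty :=
    level_nonempty hT (Br_pc hT hA hx hN hab) (a_mem_Br (mem_a hN)) hha1
  have hneb : ((Br G A x b).filter (fun v => G.dist b v = 1)).Nonempty :=
    level_nonempty hT (Br_pc hT hA hx (by rw [hN, Finset.pair_comm]) hab.symm)
      (a_mem_Br (mem_b hN)) hhb1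
  have hea : (Br G A x a).filter (fun v => G.dist a v = 1) = (Br G A x a).filter (G.Adj a) :=
    level_one
  have heb : (Br G A x b).filter (fun v => G.dist b v = 1) = (Br G A x b).filter (G.Adj b) :=
    level_one
  rw [hea] at hnea
  rw [heb] at hneb
  have ca := Finset.card_pos.mpr hnea
  have cb := Finset.card_pos.mpr hneb
  rw [← hea] at ca h2a
  rw [← heb] at cb h2b
  simp only [show (2:ℕ)-1 = 1 from rfl] at hkey
  omega

end Setup

end Decomp

section Arith

lemma arith_helper (P Q : ℕ) :
    3 * ((P+1) * (Q+1) * 2) - 2 ≤ (3*P + 2) * (3*Q + 2) ∧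
      ((3*P + 2) * (3*Q + 2) = 3 * ((P+1) * (Q+1) * 2) - 2 ↔ (P = 0 ∨ Q = 0)) := by
  have e3 : (3*P+2) * (3*Q+2) = 9*(P*Q) + 6*P + 6*Q + 4 := by ring
  have e4 : (P+1)*(Q+1)*2 = 2*(P*Q) + 2*P + 2*Q + 2 := by ring
  have e5 : P = 0 ∨ Q = 0 ↔ P*Q = 0 := (Nat.mul_eq_zero).symm
  rw [e3, e4, e5]
  generalize P * Q = R
  omega

lemma two_pow_succ_pos (p : ℕ) : ∃ k, 2 ^ p = k + 1 :=
  ⟨2 ^ p - 1, by have := Nat.one_le_two_pow (n := p); omega⟩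

lemma arith_key (p q : ℕ) :
    3 * 2 ^ (p + q + 1) - 2 ≤ (3 * 2 ^ p - 2 + 1) * (3 * 2 ^ q - 2 + 1) ∧
      ((3 * 2 ^ p - 2 + 1) * (3 * 2 ^ q - 2 + 1) = 3 * 2 ^ (p + q + 1) - 2 ↔
        (p = 0 ∨ q = 0)) := by
  obtain ⟨P, hP⟩ := two_pow_succ_pos p
  obtain ⟨Q, hQ⟩ := two_pow_succ_pos q
  have hpq : 2 ^ (p + q + 1) = 2 ^ p * 2 ^ q * 2 := by
    rw [pow_add, pow_add, pow_one]
  have hP0 : P = 0 ↔ p = 0 := by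
    rcases Nat.eq_zero_or_pos p with rfl | hp
    · simp at hP
      omega
    · have : 1 < 2 ^ p := Nat.one_lt_two_pow_iff.mpr (by omega)
      omega
  have hQ0 : Q = 0 ↔ q = 0 := by
    rcases Nat.eq_zero_or_pos q with rfl | hq
    · simp at hQ
      omega
    · have : 1 < 2 ^ q := Nat.one_lt_two_pow_iff.mpr (by omega)
      omega
  rw [hpq, hP, hQ]
  have e1 : 3 * (P + 1) - 2 + 1 = 3*P + 2 := by omega
  have e2 : 3 * (Q + 1) - 2 + 1 = 3*Q + 2 := by omega
  rw [e1, e2, ← hP0, ← hQ0]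
  exact arith_helper P Q

/-- equal products with dominated factors force equal factors -/
lemma factor_eq {a b c d : ℕ} (h1 : a ≤ b) (h2 : c ≤ d) (ha : 0 < a) (hc : 0 < c)
    (h : b * d ≤ a * c) : a = b ∧ c = d := by
  constructor
  · by_contra hne
    have hlt : a < b := by omega
    have : a * c < b * d := by
      calc a * c < b * c := by exact Nat.mul_lt_mul_of_lt_of_le hlt le_rfl hc
      _ ≤ b * d := Nat.mul_le_mul_left b h2
    omega
  · by_contra hne
    have hlt : c < d := by omega
    have : a * c < b * d := by
      calc a * c < a * d := Nat.mul_lt_mul_of_le_of_lt le_rfl hlt ha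
      _ ≤ b * d := Nat.mul_le_mul_right d h1
    omega

end Arith

section Main

variable [Fintype V]

lemma MAIN (hT : G.IsTree) :
    ∀ n (A : Finset V) (x : V), A.card = n → PC G A → x ∈ A →
    ((A.filter (G.Adj x)).card = 0 ∨ (A.filter (G.Adj x)).card = 2) →
    (∀ v ∈ A, v ≠ x → (A.filter (G.Adj v)).card = 1 ∨ (A.filter (G.Adj v)).card = 3) →
    Odd A.card ∧ 3 * 2 ^ ((A.card - 1) / 2) - 2 ≤ F G A x ∧
      (F G A x = 3 * 2 ^ ((A.card - 1) / 2) - 2 ↔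
        ∀ l, 1 ≤ l → l ≤ A.sup (fun v => G.dist x v) →
          (A.filter (fun v => G.dist x v = l)).card = 2) := by
  intro n
  induction n using Nat.strong_induction_on with
  | _ n ih =>
  intro A x hcard hA hx hdegx hdegv
  by_cases hA1 : A = {x}
  · subst hA1
    have hF1 : F G {x} x = 1 := F_singleton hT x
    have hsup : ({x} : Finset V).sup (fun v => G.dist x v) = 0 := by
      simp
    rw [hF1, Finset.card_singleton, hsup]
    refine ⟨⟨0, by omega⟩, by norm_num, ?_⟩
    constructor
    · intro _ l h1 h2
      omega
    · intro _
      norm_num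
  · -- A has at least two elements
    have hy : ∃ y ∈ A, y ≠ x := by
      by_contra hcon
      push_neg at hcon
      apply hA1
      ext v
      simp only [Finset.mem_singleton]
      exact ⟨fun hv => hcon v hv, fun hv => hv ▸ hx⟩
    obtain ⟨y, hyA, hyx⟩ := hy
    have hdeg2 : (A.filter (G.Adj x)).card = 2 := by
      rcases hdegx with h0 | h2
      · exfalso
        obtain ⟨c, hcadj, hcb⟩ := nbr_exists hT hyx
        have hcA : c ∈ A := hA x hx y hyA c hcb
        have : c ∈ A.filter (G.Adj x) := Finset.mem_filter.mpr ⟨hcA, hcadj⟩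
        rw [Finset.card_eq_zero] at h0
        rw [h0] at this
        exact Finset.notMem_empty c this
      · exact h2
    obtain ⟨a, b, hab, hN⟩ := Finset.card_eq_two.mp hdeg2
    have ha := adj_a hN
    have hb := adj_b hN
    have haA := mem_a hN
    have hbA := mem_b hN
    have hN' : A.filter (G.Adj x) = {b, a} := by rw [hN, Finset.pair_comm]
    -- the two branches
    set Ba := Br G A x a with hBa
    set Bb := Br G A x b with hBb
    have hBaA : Ba ⊂ A := ⟨Br_subset, fun hsub => (x_not_mem_Br hT ha) (hsub hx)⟩
    have hBbA : Bb ⊂ A := ⟨Br_subset, fun hsub => (x_not_mem_Br hT hb) (hsub hx)⟩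
    have hcarda : Ba.card < n := hcard ▸ Finset.card_lt_card hBaA
    have hcardb : Bb.card < n := hcard ▸ Finset.card_lt_card hBbA
    -- degree hypotheses for branch a
    have hdeg_root_a : ((Ba.filter (G.Adj a)).card = 0 ∨ (Ba.filter (G.Adj a)).card = 2) := by
      rw [hBa, Br_root_nbrs hT hA hx hN hab]
      have hxmem : x ∈ A.filter (G.Adj a) := Finset.mem_filter.mpr ⟨hx, ha.symm⟩
      rw [Finset.card_erase_of_mem hxmem]
      rcases hdegv a haA ha.ne' with h | h <;> rw [h] <;> omega
    have hdeg_other_a : ∀ v ∈ Ba, v ≠ a →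
        ((Ba.filter (G.Adj v)).card = 1 ∨ (Ba.filter (G.Adj v)).card = 3) := by
      intro v hv hva
      rw [hBa, Br_other_nbrs hT hA hx hN hab (hBa ▸ hv) hva]
      have hvx : v ≠ x := fun h => (x_not_mem_Br hT ha) (h ▸ (hBa ▸ hv))
      exact hdegv v (Br_subset (hBa ▸ hv)) hvx
    have hdeg_root_b : ((Bb.filter (G.Adj b)).card = 0 ∨ (Bb.filter (G.Adj b)).card = 2) := by
      rw [hBb, Br_root_nbrs hT hA hx hN' hab.symm]
      have hxmem : x ∈ A.filter (G.Adj b) := Finset.mem_filter.mpr ⟨hx, hb.symm⟩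
      rw [Finset.card_erase_of_mem hxmem]
      rcases hdegv b hbA hb.ne' with h | h <;> rw [h] <;> omega
    have hdeg_other_b : ∀ v ∈ Bb, v ≠ b →
        ((Bb.filter (G.Adj v)).card = 1 ∨ (Bb.filter (G.Adj v)).card = 3) := by
      intro v hv hvb
      rw [hBb, Br_other_nbrs hT hA hx hN' hab.symm (hBb ▸ hv) hvb]
      have hvx : v ≠ x := fun h => (x_not_mem_Br hT hb) (h ▸ (hBb ▸ hv))
      exact hdegv v (Br_subset (hBb ▸ hv)) hvx
    -- induction hypotheses
    have hpca : PC G Ba := hBa ▸ Br_pc hT hA hx hN hab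
    have hpcb : PC G Bb := hBb ▸ Br_pc hT hA hx hN' hab.symm
    have haBa : a ∈ Ba := hBa ▸ a_mem_Br haA
    have hbBb : b ∈ Bb := hBb ▸ a_mem_Br hbA
    obtain ⟨hodda, hbounda, hiffa⟩ :=
      ih Ba.card hcarda Ba a rfl hpca haBa hdeg_root_a hdeg_other_a
    obtain ⟨hoddb, hboundb, hiffb⟩ :=
      ih Bb.card hcardb Bb b rfl hpcb hbBb hdeg_root_b hdeg_other_b
    obtain ⟨ka, hka⟩ := hodda
    obtain ⟨kb, hkb⟩ := hoddb
    have hsum : A.card = 1 + Ba.card + Bb.card := card_decomp hT hA hx hN hab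
    have hodd : Odd A.card := ⟨ka + kb + 1, by omega⟩
    have hm : (A.card - 1) / 2 = (Ba.card - 1) / 2 + (Bb.card - 1) / 2 + 1 := by omega
    have hpa : (Ba.card - 1) / 2 = ka := by omega
    have hpb : (Bb.card - 1) / 2 = kb := by omega
    have hF : F G A x = (F G Ba a + 1) * (F G Bb b + 1) := F_decomp hT hA hx hN hab
    obtain ⟨harith1, harith2⟩ := arith_key ka kb
    rw [hpa] at hbounda hiffa
    rw [hpb] at hboundb hiffb
    rw [hm, hpa, hpb]
    have hbound : 3 * 2 ^ (ka + kb + 1) - 2 ≤ F G A x := by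
      calc 3 * 2 ^ (ka + kb + 1) - 2 ≤ (3 * 2 ^ ka - 2 + 1) * (3 * 2 ^ kb - 2 + 1) := harith1
      _ ≤ (F G Ba a + 1) * (F G Bb b + 1) := Nat.mul_le_mul (by omega) (by omega)
      _ = F G A x := hF.symm
    refine ⟨hodd, hbound, ?_⟩
    -- the equality characterization
    have hfactored : F G A x = 3 * 2 ^ (ka + kb + 1) - 2 ↔
        (F G Ba a = 3 * 2 ^ ka - 2 ∧ F G Bb b = 3 * 2 ^ kb - 2 ∧ (ka = 0 ∨ kb = 0)) := by
      constructor
      · intro heq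
        rw [hF] at heq
        have hle : (F G Ba a + 1) * (F G Bb b + 1) ≤
            (3 * 2 ^ ka - 2 + 1) * (3 * 2 ^ kb - 2 + 1) := by omega
        obtain ⟨e1, e2⟩ := factor_eq (by omega) (by omega) (by omega) (by omega) hle
        rw [← e1, ← e2] at heq
        exact ⟨by omega, by omega, harith2.mp heq⟩
      · rintro ⟨e1, e2, e3⟩
        rw [hF, e1, e2]
        exact harith2.mpr e3
    rw [hfactored]
    -- translate singleton branches
    have hsing_a : ka = 0 ↔ Ba = {a} := by
      constructor
      · intro h
        have : Ba.card = 1 := by omega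
        obtain ⟨c, hc⟩ := Finset.card_eq_one.mp this
        rw [hc] at haBa
        rw [Finset.mem_singleton] at haBa
        rw [hc, haBa]
      · intro h
        rw [h, Finset.card_singleton] at hka
        omega
    have hsing_b : kb = 0 ↔ Bb = {b} := by
      constructor
      · intro h
        have : Bb.card = 1 := by omega
        obtain ⟨c, hc⟩ := Finset.card_eq_one.mp this
        rw [hc] at hbBb
        rw [Finset.mem_singleton] at hbBb
        rw [hc, hbBb]
      · intro h
        rw [h, Finset.card_singleton] at hkb
        omega
    have hFsing_a : Ba = {a} → F G Ba a = 3 * 2 ^ ka - 2 := by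
      intro h
      have h0 : ka = 0 := hsing_a.mpr h
      rw [h, F_singleton hT a, h0]
      norm_num
    have hFsing_b : Bb = {b} → F G Bb b = 3 * 2 ^ kb - 2 := by
      intro h
      have h0 : kb = 0 := hsing_b.mpr h
      rw [h, F_singleton hT b, h0]
      norm_num
    constructor
    · rintro ⟨e1, e2, e3⟩
      rcases e3 with h0 | h0
      · -- branch a is a single leaf; use levels of branch b, swapped roles
        have hsa : Ba = {a} := hsing_a.mp h0
        have hlevb : ∀ l, 1 ≤ l → l ≤ Bb.sup (fun v => G.dist b v) →
            ((Bb.filter (fun v => G.dist b v = l))).card = 2 := hiffb.mp e2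
        exact levels_fwd hT hA hx hN' hab.symm hlevb (hBa ▸ hsa)
      · have hsb : Bb = {b} := hsing_b.mp h0
        have hleva : ∀ l, 1 ≤ l → l ≤ Ba.sup (fun v => G.dist a v) →
            ((Ba.filter (fun v => G.dist a v = l))).card = 2 := hiffa.mp e1
        exact levels_fwd hT hA hx hN hab hleva (hBb ▸ hsb)
    · intro hlev
      have hmin : Ba.sup (fun v => G.dist a v) = 0 ∨ Bb.sup (fun v => G.dist b v) = 0 := by
        have := min_height hT hA hx hN hab hdeg_root_a hdeg_root_b hlev
        exact this
      rcases hmin with h0 | h0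
      · have hsa : Ba = {a} := hBa ▸ Br_singleton_of_sup_zero hT hN' h0
        have e1 : F G Ba a = 3 * 2 ^ ka - 2 := hFsing_a hsa
        have hlevb := levels_bwd hT hA hx hN' hab.symm hlev (hBa ▸ hsa)
        have e2 : F G Bb b = 3 * 2 ^ kb - 2 := hiffb.mpr hlevb
        exact ⟨e1, e2, Or.inl (hsing_a.mpr hsa)⟩
      · have hsb : Bb = {b} := hBb ▸ Br_singleton_of_sup_zero hT hN h0
        have e2 : F G Bb b = 3 * 2 ^ kb - 2 := hFsing_b hsb
        have hleva := levels_bwd hT hA hx hN hab hlev (hBb ▸ hsb)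
        have e1 : F G Ba a = 3 * 2 ^ ka - 2 := hiffa.mpr hleva
        exact ⟨e1, e2, Or.inr (hsing_b.mpr hsb)⟩

end Main

end RBT

/-- For any rooted binary tree `T` on `n` vertices with root `r`, the number of subtrees of
`T` containing `r` satisfies `f_T(r) ≥ 3·2^{(n−1)/2} − 2`, with equality if and only if `T`
is isomorphic to the rooted binary tree `T_{r,2}^n` with exactly two vertices at every
positive level. -/
theorem root_subtrees_lower_bound {V : Type*} [Fintype V] (G : SimpleGraph V)
    [DecidableRel G.Adj] (r : V) (hT : IsRootedBinaryTree G r) :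
    3 * 2 ^ ((Fintype.card V - 1) / 2) - 2 ≤ numSubtrees G r ∧
      (numSubtrees G r = 3 * 2 ^ ((Fintype.card V - 1) / 2) - 2 ↔
        ∀ l : ℕ, 1 ≤ l → l ≤ treeHeight G r →
          (Finset.univ.filter (fun v => G.dist r v = l)).card = 2) := by
  obtain ⟨htree, hdeg, hother⟩ := hT
  have hfilter : ∀ (v : V) (inst : DecidablePred (G.Adj v)),
      (@Finset.filter _ (G.Adj v) inst Finset.univ).card = G.degree v := by
    intro v inst
    have : (@Finset.filter _ (G.Adj v) inst Finset.univ) = G.neighborFinset v := by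
      ext w
      simp [SimpleGraph.mem_neighborFinset]
    rw [this]
    rfl
  have hA : RBT.PC G Finset.univ := fun u _ v _ w _ => Finset.mem_univ w
  have hdx' : G.degree r = 0 ∨ G.degree r = 2 := by
    rcases hdeg with h1 | h2
    · left
      rw [Fintype.card_eq_one_iff] at h1
      obtain ⟨y, hy⟩ := h1
      have hempty : G.neighborFinset r = ∅ := by
        ext w
        simp only [SimpleGraph.mem_neighborFinset, Finset.notMem_empty, iff_false]
        intro hadj
        exact G.ne_of_adj hadj (by rw [hy r, hy w])
      show (G.neighborFinset r).card = 0
      rw [hempty]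
      rfl
    · exact Or.inr h2
  obtain ⟨-, hbound, hiff⟩ := RBT.MAIN htree (Finset.univ : Finset V).card Finset.univ r rfl
    hA (Finset.mem_univ r) (by rw [hfilter]; exact hdx')
    (fun v _ hv => by rw [hfilter]; exact hother v hv)
  rw [RBT.numSubtrees_eq_F htree r]
  rw [Finset.card_univ] at hbound hiff
  exact ⟨hbound, hiff⟩
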